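/- For the model y | θ ~ Normal(θ, 1) with prior θ ~ Normal(0, σ_p), where y_rep is an independent replication given θ, the conditional mutual information is I(θ, y_rep | y) = (1/2)·log((2σ_p² + 1)/(σ_p² + 1)). This quantity is strictly increasing in σ_p, tends to 0 as σ_p → 0, and tends to (1/2)·log 2 as σ_p → ∞. -/

import Mathlib

open MeasureTheory Real

/-- The normal density with mean `m` and standard deviation `s`. -/
noncomputable def gpdf (m s x : ℝ) : ℝ :=
  (s * Real.sqrt (2 * π))⁻¹ * Real.exp (-(x - m) ^ 2 / (2 * s ^ 2))

/-- Joint density of `(θ, y, y_rep)` in the model `y, y_rep | θ ~ iid Normal(θ,1)`,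
`θ ~ Normal(0, σ_p)`. -/
noncomputable def jd11 (σp θ y yr : ℝ) : ℝ :=
  gpdf 0 σp θ * gpdf θ 1 y * gpdf θ 1 yr

/-- The conditional mutual information `I(θ, y_rep | y)` for this model. -/
noncomputable def cmi11 (σp : ℝ) : ℝ :=
  ∫ θ : ℝ, ∫ y : ℝ, ∫ yr : ℝ,
    jd11 σp θ y yr *
      Real.log (jd11 σp θ y yr * (∫ t : ℝ, gpdf 0 σp t * gpdf t 1 y) /
        (gpdf 0 σp θ * gpdf θ 1 y * (∫ t : ℝ, jd11 σp t y yr)))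


lemma sqrt2pi_pos : 0 < Real.sqrt (2*π) := Real.sqrt_pos.2 (by positivity)

lemma integrable_x2_exp {b : ℝ} (hb : 0 < b) :
    Integrable fun x : ℝ => x^2 * Real.exp (-b*x^2) := by
  have h := integrable_rpow_mul_exp_neg_mul_sq hb (by norm_num : (-1:ℝ) < 2)
  refine h.congr ?_
  filter_upwards with x
  rw [show ((2:ℝ) = ((2:ℕ):ℝ)) by norm_num, Real.rpow_natCast]

lemma int_x_exp (b : ℝ) : ∫ x : ℝ, x * Real.exp (-b*x^2) = 0 := by
  have h := integral_neg_eq_self (fun x : ℝ => x * Real.exp (-b*x^2)) (volume : Measure ℝ)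
  simp only [neg_sq, neg_mul, integral_neg] at h
  simp only [neg_mul]
  linarith

lemma int_x2_exp {b : ℝ} (hb : 0 < b) :
    ∫ x : ℝ, x^2 * Real.exp (-b*x^2) = Real.sqrt (π/b) / (2*b) := by
  have h0 : ∫ x : ℝ, (fun t => t^2 * Real.exp (-b*t^2)) |x| = 2 * ∫ t in Set.Ioi (0:ℝ), t^2 * Real.exp (-b*t^2) :=
    integral_comp_abs (f := fun t => t^2 * Real.exp (-b*t^2))
  simp only [sq_abs] at h0
  have h1 : ∫ t in Set.Ioi (0:ℝ), t^2 * Real.exp (-b*t^2)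
      = ∫ t in Set.Ioi (0:ℝ), t ^ (2:ℝ) * Real.exp (-b * t ^ (2:ℝ)) := by
    refine setIntegral_congr_fun measurableSet_Ioi (fun x hx => ?_)
    rw [show ((2:ℝ) = ((2:ℕ):ℝ)) by norm_num, Real.rpow_natCast]
  have h2 := integral_rpow_mul_exp_neg_mul_rpow (two_pos) (by norm_num : (-1:ℝ) < 2) hb
  rw [h0, h1, h2]
  have hG : Real.Gamma ((2+1)/2) = Real.sqrt π / 2 := by
    rw [show ((2:ℝ)+1)/2 = 1/2 + 1 by norm_num, Real.Gamma_add_one (by norm_num : (1/2:ℝ) ≠ 0),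
      Real.Gamma_one_half_eq]
    ring
  rw [hG]
  rw [show (-((2:ℝ)+1)/2) = -(3/2) by norm_num, Real.rpow_neg hb.le,
    show ((3:ℝ)/2) = 1 + 1/2 by norm_num, Real.rpow_add hb, Real.rpow_one,
    ← Real.sqrt_eq_rpow]
  rw [Real.sqrt_div Real.pi_pos.le]
  have hsb : Real.sqrt b ≠ 0 := (Real.sqrt_pos.2 hb).ne'
  have hsb2 : Real.sqrt b * Real.sqrt b = b := Real.mul_self_sqrt hb.le
  field_simp

lemma gpdf_pos {s : ℝ} (hs : 0 < s) (m x : ℝ) : 0 < gpdf m s x := by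
  have h := sqrt2pi_pos
  unfold gpdf
  positivity

lemma gauss_quad (m s A B C : ℝ) (hs : 0 < s) :
    ∫ x : ℝ, gpdf m s x * (A*(x-m)^2 + B*(x-m) + C) = A * s^2 + C := by
  have hb : (0:ℝ) < (2*s^2)⁻¹ := by positivity
  have e1 : ∫ x : ℝ, gpdf m s x * (A*(x-m)^2 + B*(x-m) + C)
      = ∫ x : ℝ, (s * Real.sqrt (2*π))⁻¹ * ((A*x^2 + B*x + C) * Real.exp (-(2*s^2)⁻¹*x^2)) := by
    rw [← integral_add_right_eq_self
      (fun x => gpdf m s x * (A*(x-m)^2 + B*(x-m) + C)) m]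
    congr 1
    funext x
    simp only [gpdf, add_sub_cancel_right]
    rw [show -x^2/(2*s^2) = -(2*s^2)⁻¹*x^2 by ring]
    ring
  rw [e1, integral_const_mul]
  have e2 : ∫ x : ℝ, (A*x^2 + B*x + C) * Real.exp (-(2*s^2)⁻¹*x^2)
      = A * (Real.sqrt (π/(2*s^2)⁻¹) / (2*(2*s^2)⁻¹)) + (B * 0 + C * Real.sqrt (π/(2*s^2)⁻¹)) := by
    have i2 : Integrable fun x : ℝ => A * (x^2 * Real.exp (-(2*s^2)⁻¹*x^2)) :=
      (integrable_x2_exp hb).const_mul A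
    have i1 : Integrable fun x : ℝ => B * (x * Real.exp (-(2*s^2)⁻¹*x^2)) :=
      (integrable_mul_exp_neg_mul_sq hb).const_mul B
    have i0 : Integrable fun x : ℝ => C * Real.exp (-(2*s^2)⁻¹*x^2) :=
      (integrable_exp_neg_mul_sq hb).const_mul C
    have e3 : (fun x : ℝ => (A*x^2 + B*x + C) * Real.exp (-(2*s^2)⁻¹*x^2))
        = fun x : ℝ => A * (x^2 * Real.exp (-(2*s^2)⁻¹*x^2))
          + (B * (x * Real.exp (-(2*s^2)⁻¹*x^2)) + C * Real.exp (-(2*s^2)⁻¹*x^2)) := by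
      funext x; ring
    have i10 : Integrable (fun x : ℝ => B * (x * Real.exp (-(2*s^2)⁻¹*x^2))
        + C * Real.exp (-(2*s^2)⁻¹*x^2)) := i1.add i0
    rw [e3, integral_add i2 i10, integral_add i1 i0, integral_const_mul, integral_const_mul, integral_const_mul,
      int_x2_exp hb, int_x_exp, integral_gaussian]
  rw [e2]
  have hsp : Real.sqrt (π/(2*s^2)⁻¹) = s * Real.sqrt (2*π) := by
    rw [show π/(2*s^2)⁻¹ = s^2*(2*π) by field_simp, Real.sqrt_mul (sq_nonneg s),
      Real.sqrt_sq hs.le]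
  rw [hsp]
  have h2 := sqrt2pi_pos
  field_simp
  ring

lemma gauss_quadf (m s : ℝ) (hs : 0 < s) (f : ℝ → ℝ)
    (hf : ∀ x, f x = ((f (m+1) + f (m-1))/2 - f m)*(x-m)^2
      + ((f (m+1) - f (m-1))/2)*(x-m) + f m) :
    ∫ x : ℝ, gpdf m s x * f x = ((f (m+1) + f (m-1))/2 - f m) * s^2 + f m := by
  rw [show (fun x => gpdf m s x * f x)
      = fun x => gpdf m s x * (((f (m+1) + f (m-1))/2 - f m)*(x-m)^2
        + ((f (m+1) - f (m-1))/2)*(x-m) + f m) from funext fun x => by rw [hf x]]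
  exact gauss_quad m s _ _ _ hs

lemma gpdf_integral_one (m s : ℝ) (hs : 0 < s) : ∫ x : ℝ, gpdf m s x = 1 := by
  have h := gauss_quad m s 0 0 1 hs
  simpa using h

lemma marg (σp : ℝ) (hσ : 0 < σp) (y : ℝ) :
    ∫ t : ℝ, gpdf 0 σp t * gpdf t 1 y
      = (Real.sqrt (2*π) * Real.sqrt (σp^2+1))⁻¹ * Real.exp (-y^2/(2*(σp^2+1))) := by
  have h1 : (0:ℝ) < σp^2+1 := by positivity
  have hu : 0 < Real.sqrt (σp^2+1) := Real.sqrt_pos.2 h1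
  have hu2 : Real.sqrt (σp^2+1) ^ 2 = σp^2+1 := Real.sq_sqrt h1.le
  have hs' : 0 < σp / Real.sqrt (σp^2+1) := div_pos hσ hu
  have h2 := sqrt2pi_pos
  have key : ∀ t : ℝ, gpdf 0 σp t * gpdf t 1 y
      = ((Real.sqrt (2*π) * Real.sqrt (σp^2+1))⁻¹ * Real.exp (-y^2/(2*(σp^2+1))))
        * gpdf (σp^2*y/(σp^2+1)) (σp/Real.sqrt (σp^2+1)) t := by
    intro t
    unfold gpdf
    rw [show (σp * Real.sqrt (2*π))⁻¹ * Real.exp (-(t-0)^2/(2*σp^2))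
        * ((1 * Real.sqrt (2*π))⁻¹ * Real.exp (-(y-t)^2/(2*1^2)))
        = ((σp * Real.sqrt (2*π))⁻¹ * (1 * Real.sqrt (2*π))⁻¹)
          * Real.exp (-(t-0)^2/(2*σp^2) + -(y-t)^2/(2*1^2)) from by
      rw [Real.exp_add]; ring]
    rw [show (Real.sqrt (2*π) * Real.sqrt (σp^2+1))⁻¹ * Real.exp (-y^2/(2*(σp^2+1)))
        * ((σp/Real.sqrt (σp^2+1) * Real.sqrt (2*π))⁻¹
          * Real.exp (-(t - σp^2*y/(σp^2+1))^2/(2*(σp/Real.sqrt (σp^2+1))^2)))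
        = ((Real.sqrt (2*π) * Real.sqrt (σp^2+1))⁻¹ * (σp/Real.sqrt (σp^2+1) * Real.sqrt (2*π))⁻¹)
          * Real.exp (-y^2/(2*(σp^2+1))
            + -(t - σp^2*y/(σp^2+1))^2/(2*(σp/Real.sqrt (σp^2+1))^2)) from by
      rw [Real.exp_add]; ring]
    congr 1
    · field_simp
    · congr 1
      rw [div_pow, hu2]
      field_simp
      ring
  rw [show (∫ t : ℝ, gpdf 0 σp t * gpdf t 1 y) = ∫ t : ℝ, ((Real.sqrt (2*π) * Real.sqrt (σp^2+1))⁻¹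
      * Real.exp (-y^2/(2*(σp^2+1)))) * gpdf (σp^2*y/(σp^2+1)) (σp/Real.sqrt (σp^2+1)) t from by
    congr 1; funext t; exact key t]
  rw [integral_const_mul, gpdf_integral_one _ _ hs', mul_one]

lemma mul_exp_comb (A B x y : ℝ) :
    A * Real.exp x * (B * Real.exp y) = (A*B) * Real.exp (x+y) := by
  rw [Real.exp_add]; ring

lemma jmarg (σp : ℝ) (hσ : 0 < σp) (y yr : ℝ) :
    ∫ t : ℝ, jd11 σp t y yr
      = (2*π*Real.sqrt (2*σp^2+1))⁻¹
        * Real.exp (-(y^2+yr^2)/2 + σp^2*(y+yr)^2/(2*(2*σp^2+1))) := by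
  have h1 : (0:ℝ) < 2*σp^2+1 := by positivity
  have hu : 0 < Real.sqrt (2*σp^2+1) := Real.sqrt_pos.2 h1
  have hu2 : Real.sqrt (2*σp^2+1) ^ 2 = 2*σp^2+1 := Real.sq_sqrt h1.le
  have hs' : 0 < σp / Real.sqrt (2*σp^2+1) := div_pos hσ hu
  have h2 := sqrt2pi_pos
  have h2pi : Real.sqrt (2*π) * Real.sqrt (2*π) = 2*π := Real.mul_self_sqrt (by positivity)
  have key : ∀ t : ℝ, jd11 σp t y yr
      = ((2*π*Real.sqrt (2*σp^2+1))⁻¹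
          * Real.exp (-(y^2+yr^2)/2 + σp^2*(y+yr)^2/(2*(2*σp^2+1))))
        * gpdf (σp^2*(y+yr)/(2*σp^2+1)) (σp/Real.sqrt (2*σp^2+1)) t := by
    intro t
    unfold jd11 gpdf
    rw [mul_exp_comb, mul_exp_comb, mul_exp_comb]
    congr 1
    · rw [← h2pi]
      rw [Real.sqrt_mul_self h2.le]
      field_simp
    · congr 1
      rw [div_pow, hu2]
      field_simp
      ring
  rw [show (∫ t : ℝ, jd11 σp t y yr)
      = ∫ t : ℝ, ((2*π*Real.sqrt (2*σp^2+1))⁻¹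
          * Real.exp (-(y^2+yr^2)/2 + σp^2*(y+yr)^2/(2*(2*σp^2+1))))
        * gpdf (σp^2*(y+yr)/(2*σp^2+1)) (σp/Real.sqrt (2*σp^2+1)) t from by
    congr 1; funext t; exact key t]
  rw [integral_const_mul, gpdf_integral_one _ _ hs', mul_one]

noncomputable def L11 (a : ℝ) : ℝ := (1/2) * Real.log ((2*a+1)/(a+1))

noncomputable def G0 (a θ y yr : ℝ) : ℝ :=
  L11 a + (-(yr-θ)^2/2 - y^2/(2*(a+1)) + (y^2+yr^2)/2 - a*(y+yr)^2/(2*(2*a+1)))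

noncomputable def H1 (a θ y : ℝ) : ℝ :=
  L11 a + (-(1:ℝ)/2 - y^2/(2*(a+1)) + (y^2+θ^2+1)/2 - a*((y+θ)^2+1)/(2*(2*a+1)))

noncomputable def H2 (a θ : ℝ) : ℝ :=
  L11 a + (-(1:ℝ)/2 - (θ^2+1)/(2*(a+1)) + (2*θ^2+2)/2 - a*(4*θ^2+2)/(2*(2*a+1)))

lemma log_ratio (σp : ℝ) (hσ : 0 < σp) (θ y yr : ℝ) :
    Real.log (jd11 σp θ y yr
        * ((Real.sqrt (2*π) * Real.sqrt (σp^2+1))⁻¹ * Real.exp (-y^2/(2*(σp^2+1))))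
      / (gpdf 0 σp θ * gpdf θ 1 y
        * ((2*π*Real.sqrt (2*σp^2+1))⁻¹
            * Real.exp (-(y^2+yr^2)/2 + σp^2*(y+yr)^2/(2*(2*σp^2+1))))))
      = G0 (σp^2) θ y yr := by
  have h1 : (0:ℝ) < σp^2+1 := by positivity
  have h2 : (0:ℝ) < 2*σp^2+1 := by positivity
  have hu1 : 0 < Real.sqrt (σp^2+1) := Real.sqrt_pos.2 h1
  have hu2 : 0 < Real.sqrt (2*σp^2+1) := Real.sqrt_pos.2 h2
  have hsq := sqrt2pi_pos
  have hpi : (0:ℝ) < 2*π := by positivity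
  have hP1 : 0 < gpdf 0 σp θ := gpdf_pos hσ _ _
  have hP2 : 0 < gpdf θ 1 y := gpdf_pos one_pos _ _
  have hP3 : 0 < gpdf θ 1 yr := gpdf_pos one_pos _ _
  have hM : (0:ℝ) < (Real.sqrt (2*π) * Real.sqrt (σp^2+1))⁻¹
      * Real.exp (-y^2/(2*(σp^2+1))) := by positivity
  have hJ : (0:ℝ) < (2*π*Real.sqrt (2*σp^2+1))⁻¹
      * Real.exp (-(y^2+yr^2)/2 + σp^2*(y+yr)^2/(2*(2*σp^2+1))) := by positivity
  rw [show jd11 σp θ y yr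
        * ((Real.sqrt (2*π) * Real.sqrt (σp^2+1))⁻¹ * Real.exp (-y^2/(2*(σp^2+1))))
      / (gpdf 0 σp θ * gpdf θ 1 y
        * ((2*π*Real.sqrt (2*σp^2+1))⁻¹
            * Real.exp (-(y^2+yr^2)/2 + σp^2*(y+yr)^2/(2*(2*σp^2+1)))))
      = gpdf θ 1 yr
        * ((Real.sqrt (2*π) * Real.sqrt (σp^2+1))⁻¹ * Real.exp (-y^2/(2*(σp^2+1))))
      / ((2*π*Real.sqrt (2*σp^2+1))⁻¹
            * Real.exp (-(y^2+yr^2)/2 + σp^2*(y+yr)^2/(2*(2*σp^2+1)))) from by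
    unfold jd11
    field_simp]
  rw [Real.log_div (by positivity) hJ.ne', Real.log_mul hP3.ne' hM.ne']
  unfold gpdf
  rw [Real.log_mul (by positivity) (Real.exp_ne_zero _),
    Real.log_mul (by positivity) (Real.exp_ne_zero _),
    Real.log_mul (by positivity) (Real.exp_ne_zero _),
    Real.log_exp, Real.log_exp, Real.log_exp, one_mul,
    Real.log_inv, Real.log_inv, Real.log_inv,
    Real.log_mul hsq.ne' hu1.ne', Real.log_mul hpi.ne' hu2.ne',
    Real.log_sqrt (by positivity : (0:ℝ) ≤ 2*π),
    Real.log_sqrt h1.le, Real.log_sqrt h2.le]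
  unfold G0 L11
  rw [Real.log_div h2.ne' h1.ne']
  ring

set_option maxHeartbeats 1000000 in
lemma cmi_eval (σp : ℝ) (hσ : 0 < σp) :
    cmi11 σp = (1/2) * Real.log ((2*σp^2+1)/(σp^2+1)) := by
  have h1 : (0:ℝ) < σp^2+1 := by positivity
  have h2 : (0:ℝ) < 2*σp^2+1 := by positivity
  unfold cmi11
  have e1 : ∀ θ y yr : ℝ, jd11 σp θ y yr *
      Real.log (jd11 σp θ y yr * (∫ t : ℝ, gpdf 0 σp t * gpdf t 1 y) /
        (gpdf 0 σp θ * gpdf θ 1 y * (∫ t : ℝ, jd11 σp t y yr)))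
      = jd11 σp θ y yr * G0 (σp^2) θ y yr := by
    intro θ y yr
    rw [marg σp hσ y, jmarg σp hσ y yr, log_ratio σp hσ θ y yr]
  simp only [e1]
  have e2 : ∀ θ y : ℝ, ∫ yr : ℝ, jd11 σp θ y yr * G0 (σp^2) θ y yr
      = gpdf 0 σp θ * (gpdf θ 1 y * H1 (σp^2) θ y) := by
    intro θ y
    rw [show (fun yr : ℝ => jd11 σp θ y yr * G0 (σp^2) θ y yr)
        = fun yr : ℝ => (gpdf 0 σp θ * gpdf θ 1 y) * (gpdf θ 1 yr * G0 (σp^2) θ y yr) from by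
      funext yr; unfold jd11; ring]
    rw [integral_const_mul, gauss_quadf θ 1 one_pos (G0 (σp^2) θ y)
      (by intro x; simp only [G0]; ring)]
    simp only [G0, H1]
    ring
  simp only [e2]
  have e3 : ∀ θ : ℝ, ∫ y : ℝ, gpdf 0 σp θ * (gpdf θ 1 y * H1 (σp^2) θ y)
      = gpdf 0 σp θ * H2 (σp^2) θ := by
    intro θ
    rw [integral_const_mul, gauss_quadf θ 1 one_pos (H1 (σp^2) θ)
      (by intro x; simp only [H1]; ring)]
    simp only [H1, H2]
    ring
  simp only [e3]
  rw [gauss_quadf 0 σp hσ (H2 (σp^2))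
    (by intro x; simp only [H2]; ring)]
  simp only [H2, L11]
  field_simp
  ring

lemma mono_part : StrictMonoOn (fun s : ℝ => (1 / 2) * Real.log ((2 * s ^ 2 + 1) / (s ^ 2 + 1)))
    (Set.Ioi 0) := by
  intro s hs t ht hst
  simp only
  have hs0 : (0:ℝ) < s := hs
  have ht0 : (0:ℝ) < t := ht
  have h1 : (0:ℝ) < s^2+1 := by positivity
  have h2 : (0:ℝ) < t^2+1 := by positivity
  have harg : (2*s^2+1)/(s^2+1) < (2*t^2+1)/(t^2+1) := by
    rw [div_lt_div_iff₀ h1 h2]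
    nlinarith [mul_pos (sub_pos.2 hst) (show (0:ℝ) < t+s by linarith)]
  have hpos : (0:ℝ) < (2*s^2+1)/(s^2+1) := by positivity
  have := Real.log_lt_log hpos harg
  linarith

lemma tendsto_zero_part :
    Filter.Tendsto (fun s : ℝ => (1 / 2) * Real.log ((2 * s ^ 2 + 1) / (s ^ 2 + 1)))
      (nhdsWithin 0 (Set.Ioi 0)) (nhds 0) := by
  have hd : Filter.Tendsto (fun s : ℝ => (2 * s ^ 2 + 1) / (s ^ 2 + 1)) (nhds 0) (nhds 1) := by
    have hc : ContinuousAt (fun s : ℝ => (2 * s ^ 2 + 1) / (s ^ 2 + 1)) 0 :=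
      ContinuousAt.div (by fun_prop) (by fun_prop) (by norm_num)
    have h := hc.tendsto
    norm_num at h
    exact h
  have hl : Filter.Tendsto Real.log (nhds 1) (nhds 0) := by
    have h := (Real.continuousAt_log one_ne_zero).tendsto
    rwa [Real.log_one] at h
  have h := ((hl.comp hd).const_mul (1/2 : ℝ)).mono_left
    (nhdsWithin_le_nhds (s := Set.Ioi (0:ℝ)))
  simpa [Function.comp_def] using h

lemma tendsto_top_part :
    Filter.Tendsto (fun s : ℝ => (1 / 2) * Real.log ((2 * s ^ 2 + 1) / (s ^ 2 + 1)))
      Filter.atTop (nhds ((1 / 2) * Real.log 2)) := by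
  have h0 : Filter.Tendsto (fun s : ℝ => (2 * s ^ 2 + 1) / (s ^ 2 + 1)) Filter.atTop (nhds 2) := by
    have he : ∀ᶠ s : ℝ in Filter.atTop, (2 + (s^2)⁻¹) / (1 + (s^2)⁻¹) = (2*s^2+1)/(s^2+1) := by
      filter_upwards [Filter.eventually_gt_atTop (0:ℝ)] with s hs
      have : s^2 ≠ 0 := by positivity
      field_simp
    have hinv : Filter.Tendsto (fun s : ℝ => (s^2)⁻¹) Filter.atTop (nhds 0) := by
      exact (Filter.tendsto_pow_atTop two_ne_zero).inv_tendsto_atTop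
    have := ((hinv.const_add 2).div (hinv.const_add 1) (by norm_num)).congr' he
    simpa using this
  have hl : Filter.Tendsto (fun x : ℝ => Real.log x) (nhds 2) (nhds (Real.log 2)) :=
    (Real.continuousAt_log (by norm_num)).tendsto
  exact (hl.comp h0).const_mul (1/2)

/-- For `y | θ ~ Normal(θ,1)`, `θ ~ Normal(0,σ_p)` with an independent
replication `y_rep` given `θ`, `I(θ, y_rep | y) = (1/2) log((2σ_p² + 1)/(σ_p² + 1))`;
this quantity is strictly increasing in `σ_p > 0`, tends to `0` as `σ_p → 0⁺`, and tends
to `(1/2) log 2` as `σ_p → ∞`. -/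
theorem cmi_normal_location_model :
    (∀ σp : ℝ, 0 < σp →
      cmi11 σp = (1 / 2) * Real.log ((2 * σp ^ 2 + 1) / (σp ^ 2 + 1))) ∧
    StrictMonoOn (fun s : ℝ => (1 / 2) * Real.log ((2 * s ^ 2 + 1) / (s ^ 2 + 1)))
      (Set.Ioi 0) ∧
    Filter.Tendsto (fun s : ℝ => (1 / 2) * Real.log ((2 * s ^ 2 + 1) / (s ^ 2 + 1)))
      (nhdsWithin 0 (Set.Ioi 0)) (nhds 0) ∧
    Filter.Tendsto (fun s : ℝ => (1 / 2) * Real.log ((2 * s ^ 2 + 1) / (s ^ 2 + 1)))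
      Filter.atTop (nhds ((1 / 2) * Real.log 2)) := by
  exact ⟨fun σp hσ => cmi_eval σp hσ, mono_part, tendsto_zero_part, tendsto_top_part⟩
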